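/- Let P : C^op → InfSL be a variational first order doctrine whose base C has distributive binary coproducts. Then the canonical coproduct injections i_A : A → A+B and i_B : B → A+B are P-injective, i.e. P(i_A × i_A)(δ_{A+B}) = δ_A and P(i_B × i_B)(δ_{A+B}) = δ_B. -/

import Mathlib

open CategoryTheory CategoryTheory.Limits Opposite

noncomputable section

universe w v u

namespace DoctrinePaper

variable {C : Type u} [Category.{v} C] [HasFiniteProducts C]

/-- The fiber of a primary doctrine `P : Cᵒᵖ ⥤ SemilatInfCat` over an object `A`. -/
abbrev Fib (P : Cᵒᵖ ⥤ SemilatInfCat.{w}) (A : C) : Type w :=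
  ↥(P.obj (op A))

/-- Reindexing along an arrow `f : A ⟶ B`. -/
def rmap (P : Cᵒᵖ ⥤ SemilatInfCat.{w}) {A B : C} (f : A ⟶ B) :
    Fib P B → Fib P A :=
  fun x => (P.map f.op) x

variable (P : Cᵒᵖ ⥤ SemilatInfCat.{w})

/-- An elementary doctrine: fibered equalities `δ A ∈ P (A ⨯ A)` such that
`E_e(α) = P⟨pr1,pr2⟩(α) ⊓ P⟨pr2,pr3⟩(δ A)` is left adjoint to reindexing along
`e = ⟨pr1,pr2,pr2⟩ : X ⨯ A ⟶ (X ⨯ A) ⨯ A`. -/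
structure IsElementary where
  δ : ∀ A : C, Fib P (A ⨯ A)
  adj :
    ∀ (X A : C) (α : Fib P (X ⨯ A)) (β : Fib P ((X ⨯ A) ⨯ A)),
      (rmap P (prod.fst : (X ⨯ A) ⨯ A ⟶ X ⨯ A) α ⊓
          rmap P (prod.lift (prod.fst ≫ prod.snd) prod.snd : (X ⨯ A) ⨯ A ⟶ A ⨯ A) (δ A) ≤ β)
        ↔ α ≤ rmap P (prod.lift (𝟙 (X ⨯ A)) prod.snd : X ⨯ A ⟶ (X ⨯ A) ⨯ A) β

/-- A `P`-equivalence relation over `A`. -/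
structure IsEqRel (hE : IsElementary P) {A : C} (ρ : Fib P (A ⨯ A)) : Prop where
  refl : hE.δ A ≤ ρ
  symm : ρ = rmap P (prod.lift prod.snd prod.fst : A ⨯ A ⟶ A ⨯ A) ρ
  trans :
    rmap P (prod.fst : (A ⨯ A) ⨯ A ⟶ A ⨯ A) ρ ⊓
        rmap P (prod.lift (prod.fst ≫ prod.snd) prod.snd : (A ⨯ A) ⨯ A ⟶ A ⨯ A) ρ ≤
      rmap P (prod.lift (prod.fst ≫ prod.fst) prod.snd : (A ⨯ A) ⨯ A ⟶ A ⨯ A) ρ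

/-- An elementary existential doctrine, together with the induced left adjoints
`∃_f` along all arrows, satisfying the adjunction law, Frobenius reciprocity, and
the Beck–Chevalley condition along pullbacks of projections. -/
structure IsExistential extends IsElementary P where
  E : ∀ {A B : C}, (A ⟶ B) → Fib P A → Fib P B
  adjE : ∀ {A B : C} (f : A ⟶ B) (α : Fib P A) (β : Fib P B),
    E f α ≤ β ↔ α ≤ rmap P f β
  frobenius : ∀ {A B : C} (f : A ⟶ B) (α : Fib P A) (β : Fib P B),
    E f (α ⊓ rmap P f β) = E f α ⊓ β
  beckChevalley : ∀ {B A A' : C} (f : A' ⟶ A) (β : Fib P (B ⨯ A)),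
    E (prod.snd : B ⨯ A' ⟶ A') (rmap P (prod.map (𝟙 B) f) β) =
      rmap P f (E (prod.snd : B ⨯ A ⟶ A) β)

/-- Descent data for a relation `ρ` over `A`. -/
def Des {A : C} (ρ : Fib P (A ⨯ A)) : Set (Fib P A) :=
  {α | rmap P (prod.fst : A ⨯ A ⟶ A) α ⊓ ρ ≤ rmap P (prod.snd : A ⨯ A ⟶ A) α}

/-- Comprehensive diagonals: `f = g` iff `⊤ = P⟨f,g⟩(δ)`. -/
def ComprehensiveDiagonals (hE : IsElementary P) : Prop :=
  ∀ {X A : C} (f g : X ⟶ A), f = g ↔ rmap P (prod.lift f g) (hE.δ A) = ⊤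

/-- (Weak) comprehension structure. -/
structure Comprehension where
  cObj : ∀ {A : C}, Fib P A → C
  cArr : ∀ {A : C} (α : Fib P A), cObj α ⟶ A
  cTop : ∀ {A : C} (α : Fib P A), rmap P (cArr α) α = ⊤
  cUniv : ∀ {A : C} (α : Fib P A) {Y : C} (f : Y ⟶ A),
    rmap P f α = ⊤ → ∃ k : Y ⟶ cObj α, k ≫ cArr α = f

/-- Full comprehension. -/
def Comprehension.Full (hC : Comprehension P) : Prop :=
  ∀ {A : C} (α β : Fib P A), α ≤ β ↔ rmap P (hC.cArr α) β = ⊤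

/-- Strong comprehension: comprehension arrows are monic. -/
def Comprehension.Strong (hC : Comprehension P) : Prop :=
  ∀ {A : C} (α : Fib P A), Mono (hC.cArr α)

/-- `P`-injective arrow. -/
def PInj (hE : IsElementary P) {X A : C} (f : X ⟶ A) : Prop :=
  rmap P (prod.map f f) (hE.δ A) = hE.δ X

/-- `P`-surjective arrow. -/
def PSurj (hEx : IsExistential P) {X A : C} (f : X ⟶ A) : Prop :=
  hEx.E f (⊤ : Fib P X) = ⊤

/-- The product relation `ρ ⊠ σ` on `(A ⨯ B) ⨯ (A ⨯ B)`. -/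
def boxprod {A B : C} (ρ : Fib P (A ⨯ A)) (σ : Fib P (B ⨯ B)) :
    Fib P ((A ⨯ B) ⨯ (A ⨯ B)) :=
  rmap P (prod.map prod.fst prod.fst) ρ ⊓ rmap P (prod.map prod.snd prod.snd) σ

/-- A topology on a primary doctrine: a natural family of extensive, idempotent
inf-top-preserving maps commuting with reindexing. -/
structure DocTopology where
  j : ∀ {A : C}, Fib P A → Fib P A
  map_inf : ∀ {A : C} (α β : Fib P A), j (α ⊓ β) = j α ⊓ j β
  map_top : ∀ {A : C}, j (⊤ : Fib P A) = ⊤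
  natural : ∀ {A B : C} (f : A ⟶ B) (β : Fib P B), rmap P f (j β) = j (rmap P f β)
  le_j : ∀ {A : C} (α : Fib P A), α ≤ j α
  idem : ∀ {A : C} (α : Fib P A), j (j α) = j α

/-- An implicational doctrine: each fiber has Heyting implication. -/
structure IsImplicational where
  imp : ∀ {A : C}, Fib P A → Fib P A → Fib P A
  adj : ∀ {A : C} (α β γ : Fib P A), γ ≤ imp α β ↔ γ ⊓ α ≤ β

/-- A universal doctrine: right adjoints to reindexing along projections,
satisfying the Beck–Chevalley condition. -/
structure IsUniversal where
  all : ∀ {B A : C}, Fib P (B ⨯ A) → Fib P A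
  adj : ∀ {B A : C} (γ : Fib P (B ⨯ A)) (β : Fib P A),
    rmap P (prod.snd : B ⨯ A ⟶ A) β ≤ γ ↔ β ≤ all γ
  beckChevalley : ∀ {B A A' : C} (f : A' ⟶ A) (γ : Fib P (B ⨯ A)),
    rmap P f (all γ) = all (rmap P (prod.map (𝟙 B) f) γ)

/-- A disjunctive doctrine: each fiber has finite distributive joins, preserved
by reindexing. -/
structure IsDisjunctive where
  bot : ∀ {A : C}, Fib P A
  sup : ∀ {A : C}, Fib P A → Fib P A → Fib P A
  bot_le : ∀ {A : C} (α : Fib P A), bot ≤ α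
  le_sup_left : ∀ {A : C} (α β : Fib P A), α ≤ sup α β
  le_sup_right : ∀ {A : C} (α β : Fib P A), β ≤ sup α β
  sup_le : ∀ {A : C} (α β γ : Fib P A), α ≤ γ → β ≤ γ → sup α β ≤ γ
  inf_sup_distrib : ∀ {A : C} (α β γ : Fib P A), α ⊓ sup β γ = sup (α ⊓ β) (α ⊓ γ)
  map_bot : ∀ {A B : C} (f : A ⟶ B), rmap P f bot = bot
  map_sup : ∀ {A B : C} (f : A ⟶ B) (β γ : Fib P B),
    rmap P f (sup β γ) = sup (rmap P f β) (rmap P f γ)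

lemma rmap_comp' {A B D : C} (f : A ⟶ B) (g : B ⟶ D) (x : Fib P D) :
    rmap P (f ≫ g) x = rmap P f (rmap P g x) := by
  show (P.map (f ≫ g).op) x = (P.map f.op) ((P.map g.op) x)
  rw [op_comp, P.map_comp]
  rfl

/-- Any arrow that is cancellable (left-cancellable under postcomposition) is
`P`-injective, in a doctrine with full comprehension and comprehensive diagonals. -/
lemma pinj_of_cancel (hE : IsElementary P) (hC : Comprehension P) (hfull : hC.Full P)
    (hcd : ComprehensiveDiagonals P hE) {X A : C} (f : X ⟶ A)
    (hf : ∀ {K : C} (u v : K ⟶ X), u ≫ f = v ≫ f → u = v) :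
    PInj P hE f := by
  apply le_antisymm
  · set θ := rmap P (prod.map f f) (hE.δ A) with hθ
    set c := hC.cArr θ with hc
    have hcθ : rmap P c θ = ⊤ := hC.cTop θ
    have h1 : rmap P (prod.lift (c ≫ prod.fst ≫ f) (c ≫ prod.snd ≫ f)) (hE.δ A) = ⊤ := by
      have he : prod.lift (c ≫ prod.fst ≫ f) (c ≫ prod.snd ≫ f) = c ≫ prod.map f f := by
        apply Limits.prod.hom_ext <;> simp [prod.lift_fst, prod.lift_snd]
      rw [he, rmap_comp']
      exact hcθ
    have h2 : c ≫ prod.fst = c ≫ prod.snd := by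
      apply hf
      have := (hcd (c ≫ prod.fst ≫ f) (c ≫ prod.snd ≫ f)).2 h1
      simpa [Category.assoc] using this
    rw [hfull]
    have h3 : prod.lift (c ≫ prod.fst) (c ≫ prod.snd) = c := by
      apply Limits.prod.hom_ext <;> simp [prod.lift_fst, prod.lift_snd]
    calc rmap P c (hE.δ X)
        = rmap P (prod.lift (c ≫ prod.fst) (c ≫ prod.snd)) (hE.δ X) := by rw [h3]
      _ = ⊤ := (hcd _ _).1 h2
  · rw [hfull]
    set d := hC.cArr (hE.δ X) with hd
    have hdd : d ≫ prod.fst = d ≫ prod.snd := by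
      apply (hcd _ _).2
      have h3 : prod.lift (d ≫ prod.fst) (d ≫ prod.snd) = d := by
        apply Limits.prod.hom_ext <;> simp [prod.lift_fst, prod.lift_snd]
      rw [h3]
      exact hC.cTop _
    have he : prod.lift (d ≫ prod.fst ≫ f) (d ≫ prod.snd ≫ f) = d ≫ prod.map f f := by
      apply Limits.prod.hom_ext <;> simp [prod.lift_fst, prod.lift_snd]
    have : rmap P d (rmap P (prod.map f f) (hE.δ A)) = ⊤ := by
      rw [← rmap_comp', ← he]
      apply (hcd _ _).1
      rw [← Category.assoc, hdd, Category.assoc]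
    exact this

section Distrib

variable {P}

/-- In a category with (binary-)distributive binary coproducts, the left coproduct
injection is cancellable. -/
lemma inl_cancel [HasBinaryCoproducts C]
    (hdistrib : ∀ A B D : C,
      IsIso (coprod.desc (prod.map (𝟙 A) coprod.inl) (prod.map (𝟙 A) coprod.inr) :
        (A ⨯ B) ⨿ (A ⨯ D) ⟶ A ⨯ (B ⨿ D)))
    (A B : C) {K : C} (u v : K ⟶ A)
    (h : u ≫ (coprod.inl : A ⟶ A ⨿ B) = v ≫ coprod.inl) : u = v := by
  haveI := hdistrib A A B
  set φ : (A ⨯ A) ⨿ (A ⨯ B) ⟶ A ⨯ (A ⨿ B) :=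
    coprod.desc (prod.map (𝟙 A) coprod.inl) (prod.map (𝟙 A) coprod.inr) with hφ
  have hinl : prod.map (𝟙 A) (coprod.inl : A ⟶ A ⨿ B) ≫ inv φ = coprod.inl := by
    rw [← coprod.inl_desc (prod.map (𝟙 A) coprod.inl) (prod.map (𝟙 A) coprod.inr), ← hφ,
      Category.assoc, IsIso.hom_inv_id, Category.comp_id]
  have key : prod.map (𝟙 A) (coprod.inl : A ⟶ A ⨿ B) ≫
      inv φ ≫ coprod.desc (prod.snd : A ⨯ A ⟶ A) (prod.fst : A ⨯ B ⟶ A) = prod.snd := by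
    rw [← Category.assoc, hinl, coprod.inl_desc]
  have huv : prod.lift u v ≫ prod.map (𝟙 A) (coprod.inl : A ⟶ A ⨿ B) =
      prod.lift u u ≫ prod.map (𝟙 A) coprod.inl := by
    apply Limits.prod.hom_ext <;> simp [h]
  calc u = prod.lift u u ≫ prod.snd := by simp [prod.lift_snd]
    _ = prod.lift u u ≫ prod.map (𝟙 A) (coprod.inl : A ⟶ A ⨿ B) ≫
          inv φ ≫ coprod.desc prod.snd prod.fst := by rw [key]
    _ = prod.lift u v ≫ prod.map (𝟙 A) (coprod.inl : A ⟶ A ⨿ B) ≫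
          inv φ ≫ coprod.desc prod.snd prod.fst := by
        rw [← Category.assoc, ← Category.assoc, ← huv]
        simp only [Category.assoc]
    _ = prod.lift u v ≫ prod.snd := by rw [key]
    _ = v := by simp [prod.lift_snd]

/-- In a category with (binary-)distributive binary coproducts, the right coproduct
injection is cancellable. -/
lemma inr_cancel [HasBinaryCoproducts C]
    (hdistrib : ∀ A B D : C,
      IsIso (coprod.desc (prod.map (𝟙 A) coprod.inl) (prod.map (𝟙 A) coprod.inr) :
        (A ⨯ B) ⨿ (A ⨯ D) ⟶ A ⨯ (B ⨿ D)))
    (A B : C) {K : C} (u v : K ⟶ B)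
    (h : u ≫ (coprod.inr : B ⟶ A ⨿ B) = v ≫ coprod.inr) : u = v := by
  haveI := hdistrib B A B
  set φ : (B ⨯ A) ⨿ (B ⨯ B) ⟶ B ⨯ (A ⨿ B) :=
    coprod.desc (prod.map (𝟙 B) coprod.inl) (prod.map (𝟙 B) coprod.inr) with hφ
  have hinr : prod.map (𝟙 B) (coprod.inr : B ⟶ A ⨿ B) ≫ inv φ = coprod.inr := by
    rw [← coprod.inr_desc (prod.map (𝟙 B) coprod.inl) (prod.map (𝟙 B) coprod.inr), ← hφ,
      Category.assoc, IsIso.hom_inv_id, Category.comp_id]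
  have key : prod.map (𝟙 B) (coprod.inr : B ⟶ A ⨿ B) ≫
      inv φ ≫ coprod.desc (prod.fst : B ⨯ A ⟶ B) (prod.snd : B ⨯ B ⟶ B) = prod.snd := by
    rw [← Category.assoc, hinr, coprod.inr_desc]
  have huv : prod.lift u v ≫ prod.map (𝟙 B) (coprod.inr : B ⟶ A ⨿ B) =
      prod.lift u u ≫ prod.map (𝟙 B) coprod.inr := by
    apply Limits.prod.hom_ext <;> simp [h]
  calc u = prod.lift u u ≫ prod.snd := by simp [prod.lift_snd]
    _ = prod.lift u u ≫ prod.map (𝟙 B) (coprod.inr : B ⟶ A ⨿ B) ≫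
          inv φ ≫ coprod.desc prod.fst prod.snd := by rw [key]
    _ = prod.lift u v ≫ prod.map (𝟙 B) (coprod.inr : B ⟶ A ⨿ B) ≫
          inv φ ≫ coprod.desc prod.fst prod.snd := by
        rw [← Category.assoc, ← Category.assoc, ← huv]
        simp only [Category.assoc]
    _ = prod.lift u v ≫ prod.snd := by rw [key]
    _ = v := by simp [prod.lift_snd]

end Distrib

/-- In a variational first order doctrine over a base with
distributive binary coproducts, the coproduct injections are `P`-injective. -/
theorem coproduct_injections_PInj
    [HasBinaryCoproducts C]
    (hdistrib : ∀ A B D : C,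
      IsIso (coprod.desc (prod.map (𝟙 A) coprod.inl) (prod.map (𝟙 A) coprod.inr) :
        (A ⨯ B) ⨿ (A ⨯ D) ⟶ A ⨯ (B ⨿ D)))
    (hP : IsExistential P) (hI : IsImplicational P) (hD : IsDisjunctive P)
    (hU : IsUniversal P)
    (hC : Comprehension P) (hfull : hC.Full P)
    (hcd : ComprehensiveDiagonals P hP.toIsElementary)
    (A B : C) :
    PInj P hP.toIsElementary (coprod.inl : A ⟶ A ⨿ B) ∧
      PInj P hP.toIsElementary (coprod.inr : B ⟶ A ⨿ B) := by
  constructor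
  · exact pinj_of_cancel P hP.toIsElementary hC hfull hcd _
      (fun u v h => inl_cancel hdistrib A B u v h)
  · exact pinj_of_cancel P hP.toIsElementary hC hfull hcd _
      (fun u v h => inr_cancel hdistrib A B u v h)

end DoctrinePaper
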